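/- Let s ∈ (1, 3/2), h > 0, and let N ≥ 2 be an integer. Let S be the (N−1)×(N−1) matrix with entries S_{kj} = A_s h^{1−2s} t_{|k−j|}(s). Then S_{kk} > 0 for all k; S_{kj} < 0 when |k−j| = 1; S_{kj} > 0 when |k−j| ≥ 2; the first and last rows are strictly diagonally dominant, i.e. S_{11} > Σ_{j≠1} |S_{1j}| and S_{N−1,N−1} > Σ_{j≠N−1} |S_{N−1,j}|; and if N ≥ 4 then for every 2 ≤ k ≤ N−2 the reverse strict inequality holds: S_{kk} < Σ_{j≠k} |S_{kj}|. -/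

import Mathlib

open Real Set


/-- `t_p(s)`, with the convention `0^(3-2s) = 0` (automatic for `rpow`). -/
noncomputable def tFn (s : ℝ) (p : ℕ) : ℝ :=
  |(p : ℝ) - 2| ^ (3 - 2 * s) - 4 * |(p : ℝ) - 1| ^ (3 - 2 * s) + 6 * (p : ℝ) ^ (3 - 2 * s)
    - 4 * ((p : ℝ) + 1) ^ (3 - 2 * s) + ((p : ℝ) + 2) ^ (3 - 2 * s)

/-- `A_s = 1/(2 Γ(4-2s) cos(sπ))`. -/
noncomputable def Acoef (s : ℝ) : ℝ := 1 / (2 * Real.Gamma (4 - 2 * s) * Real.cos (s * Real.pi))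

namespace Stmt16Aux

/-- shifted power function -/
noncomputable def phi (a : ℝ) (x : ℝ) : ℝ := (x+1)^a - 2*x^a + (x-1)^a

lemma hasDerivAt_shift (c b x : ℝ) (hx : x + b ≠ 0) :
    HasDerivAt (fun y : ℝ => (y + b) ^ c) (c * (x + b) ^ (c-1)) x := by
  have h1 : HasDerivAt (fun y : ℝ => y + b) 1 x := (hasDerivAt_id x).add_const b
  have h2 : HasDerivAt (fun y : ℝ => y ^ c) (c * (x+b)^(c-1)) (x+b) :=
    Real.hasDerivAt_rpow_const (Or.inl hx)
  simpa [Function.comp_def] using h2.comp x h1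

lemma strictConvexOn_rpow_neg {c : ℝ} (hc : c < 0) :
    StrictConvexOn ℝ (Ioi (0:ℝ)) fun x : ℝ => x ^ c := by
  apply strictConvexOn_of_deriv2_pos (convex_Ioi 0)
  · exact fun x hx => (Real.continuousAt_rpow_const x c (Or.inl (ne_of_gt hx))).continuousWithinAt
  · intro x hx
    rw [interior_Ioi] at hx
    have e2 : deriv (deriv (fun x:ℝ => x^c)) x = deriv (fun y:ℝ => c * y^(c-1)) x := by
      apply Filter.EventuallyEq.deriv_eq
      filter_upwards [Ioi_mem_nhds hx] with y hy
      exact (Real.hasDerivAt_rpow_const (Or.inl (ne_of_gt hy))).deriv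
    have e3 : deriv (fun y:ℝ => c * y^(c-1)) x = c * ((c-1) * x^(c-1-1)) :=
      ((Real.hasDerivAt_rpow_const (p := c-1) (Or.inl (ne_of_gt hx))).const_mul c).deriv
    have hpos : 0 < c * ((c-1) * x^(c-1-1)) := by
      have h3 : 0 < c * (c-1) := mul_pos_of_neg_of_neg hc (by linarith)
      have := mul_pos h3 (Real.rpow_pos_of_pos hx (c-1-1))
      nlinarith
    show 0 < deriv^[2] (fun x:ℝ => x^c) x
    simp only [Function.iterate_succ, Function.iterate_zero, Function.comp_apply, id_eq]
    rw [e2, e3]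
    exact hpos

lemma continuous_phi {a : ℝ} (ha : 0 < a) : Continuous (phi a) := by
  have h0 : Continuous (fun x : ℝ => x ^ a) := by
    apply continuous_iff_continuousAt.2
    intro x
    exact Real.continuousAt_rpow_const x a (Or.inr ha.le)
  have h : ∀ b : ℝ, Continuous (fun x : ℝ => (x + b) ^ a) := by
    intro b
    exact h0.comp (continuous_add_right b)
  unfold phi
  have h1 := h 1
  have hm := h (-1)
  simp only [← sub_eq_add_neg] at hm
  exact (h1.sub (continuous_const.mul h0)).add hm

lemma phi_hasDerivAt {a x : ℝ} (hx : 1 < x) :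
    HasDerivAt (phi a) (a*(x+1)^(a-1) - 2*(a*x^(a-1)) + a*(x-1)^(a-1)) x := by
  have h1 := hasDerivAt_shift a 1 x (by linarith)
  have h2 : HasDerivAt (fun y:ℝ => y ^ a) (a * x^(a-1)) x :=
    Real.hasDerivAt_rpow_const (Or.inl (by linarith))
  have h3 := hasDerivAt_shift a (-1) x (by linarith)
  have h := (h1.sub (h2.const_mul 2)).add h3
  have hfun : (fun y:ℝ => ((y+1)^a - 2*(y^a)) + (y + -1)^a) = phi a := by
    funext y; simp [phi, sub_eq_add_neg]
  simp only [Pi.add_def, Pi.sub_def] at h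
  rw [hfun] at h
  simpa only [← sub_eq_add_neg] using h

lemma phi_strictConcaveOn {a : ℝ} (ha : 0 < a) (ha1 : a < 1) :
    StrictConcaveOn ℝ (Ici (1:ℝ)) (phi a) := by
  apply strictConcaveOn_of_deriv2_neg (convex_Ici 1) (continuous_phi ha).continuousOn
  intro x hx
  rw [interior_Ici] at hx
  have hx' : (1:ℝ) < x := hx
  have e2 : deriv (deriv (phi a)) x =
      deriv (fun y:ℝ => a*(y+1)^(a-1) - 2*(a*y^(a-1)) + a*(y-1)^(a-1)) x := by
    apply Filter.EventuallyEq.deriv_eq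
    filter_upwards [Ioi_mem_nhds hx'] with y hy
    exact (phi_hasDerivAt hy).deriv
  have d1 := (hasDerivAt_shift (a-1) 1 x (by linarith)).const_mul a
  have d2 : HasDerivAt (fun y:ℝ => y ^ (a-1)) ((a-1) * x^(a-1-1)) x :=
    Real.hasDerivAt_rpow_const (Or.inl (by linarith))
  have d2' := (d2.const_mul a)
  have d3 := (hasDerivAt_shift (a-1) (-1) x (by linarith)).const_mul a
  have hD : HasDerivAt (fun y:ℝ => a*(y+1)^(a-1) - 2*(a*y^(a-1)) + a*(y-1)^(a-1))
      (a*((a-1)*(x+1)^(a-1-1)) - 2*(a*((a-1)*x^(a-1-1))) + a*((a-1)*(x-1)^(a-1-1))) x := by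
    have h := (d1.sub ((d2'.const_mul 2))).add d3
    have hfun : (fun y:ℝ => (a*(y+1)^(a-1) - 2*(a*(y^(a-1)))) + a*(y + -1)^(a-1))
        = (fun y:ℝ => a*(y+1)^(a-1) - 2*(a*y^(a-1)) + a*(y-1)^(a-1)) := by
      funext y; rw [sub_eq_add_neg y 1]
    simp only [Pi.add_def, Pi.sub_def] at h
    rw [hfun] at h
    simpa only [← sub_eq_add_neg] using h
  -- midpoint convexity of y ^ (a-2)
  have hc : a - 2 < 0 := by linarith
  have key := (strictConvexOn_rpow_neg hc).2 (mem_Ioi.2 (by linarith : (0:ℝ) < x - 1))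
    (mem_Ioi.2 (by linarith : (0:ℝ) < x + 1)) (by intro hcon; linarith)
    (by norm_num : (0:ℝ) < 1/2) (by norm_num : (0:ℝ) < 1/2) (by norm_num)
  simp only [smul_eq_mul] at key
  have hmid : (1/2 : ℝ) * (x-1) + (1/2 : ℝ) * (x+1) = x := by ring
  rw [hmid] at key
  -- key : x ^ (a-2) < 1/2 * (x-1)^(a-2) + 1/2 * (x+1)^(a-2)
  show deriv^[2] (phi a) x < 0
  simp only [Function.iterate_succ, Function.iterate_zero, Function.comp_apply, id_eq]
  rw [e2, hD.deriv]
  have hE : a - 1 - 1 = a - 2 := by ring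
  rw [hE]
  have haa : a * (a-1) < 0 := mul_neg_of_pos_of_neg ha (by linarith)
  nlinarith [key, haa]

lemma phi_strictMonoOn {a : ℝ} (ha : 0 < a) (ha1 : a < 1) :
    StrictMonoOn (phi a) (Ici (1:ℝ)) := by
  apply strictMonoOn_of_deriv_pos (convex_Ici 1) (continuous_phi ha).continuousOn
  intro x hx
  rw [interior_Ici] at hx
  have hx' : (1:ℝ) < x := hx
  rw [(phi_hasDerivAt hx').deriv]
  have hc : a - 1 < 0 := by linarith
  have key := (strictConvexOn_rpow_neg hc).2 (mem_Ioi.2 (by linarith : (0:ℝ) < x - 1))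
    (mem_Ioi.2 (by linarith : (0:ℝ) < x + 1)) (by intro hcon; linarith)
    (by norm_num : (0:ℝ) < 1/2) (by norm_num : (0:ℝ) < 1/2) (by norm_num)
  simp only [smul_eq_mul] at key
  have hmid : (1/2 : ℝ) * (x-1) + (1/2 : ℝ) * (x+1) = x := by ring
  rw [hmid] at key
  nlinarith [key, ha]



variable {a : ℝ}

lemma two_rpow_lt_four (ha : 0 < a) (ha1 : a < 1) : (2:ℝ)^a < 4 := by
  have h := Real.rpow_lt_rpow_of_exponent_lt (by norm_num : (1:ℝ) < 2) (by linarith : a < 2)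
  have h2 : (2:ℝ) ^ (2:ℝ) = 4 := by
    rw [show (2:ℝ) = ((2:ℕ):ℝ) from by norm_num, Real.rpow_natCast]
    norm_num
  rw [h2] at h; exact h

lemma two_rpow_lt_two (ha : 0 < a) (ha1 : a < 1) : (2:ℝ)^a < 2 := by
  have h := Real.rpow_lt_rpow_of_exponent_lt (by norm_num : (1:ℝ) < 2) ha1
  rwa [Real.rpow_one] at h

lemma one_lt_three_rpow (ha : 0 < a) : 1 < (3:ℝ)^a :=
  Real.one_lt_rpow (by norm_num) ha

lemma three_rpow_lt_three (ha : 0 < a) (ha1 : a < 1) : (3:ℝ)^a < 3 := by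
  have h := Real.rpow_lt_rpow_of_exponent_lt (by norm_num : (1:ℝ) < 3) ha1
  rwa [Real.rpow_one] at h

lemma fact5 (ha : 0 < a) (ha1 : a < 1) : 2 + 2*(3:ℝ)^a < 5*(2:ℝ)^a := by
  have hB : (3:ℝ)^a ≤ 1 + a*2 := by
    have := rpow_one_add_le_one_add_mul_self (show (-1:ℝ) ≤ 2 by norm_num) ha.le ha1.le
    norm_num at this
    linarith
  have hA : Real.log 2 * a + 1 ≤ (2:ℝ)^a := by
    rw [Real.rpow_def_of_pos (by norm_num : (0:ℝ) < 2)]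
    exact Real.add_one_le_exp _
  have hl1 := Real.log_two_gt_d9
  have hl2 := Real.log_two_lt_d9
  nlinarith [mul_lt_mul_of_neg_right ha1 (show 5*Real.log 2 - 4 < 0 by nlinarith)]

lemma fact6 (ha : 0 < a) (ha1 : a < 1) : 3*(2:ℝ)^a < 3 + (3:ℝ)^a := by
  set θ : ℝ := Real.log 2 / Real.log 3 with hθdef
  have hlog3 : (0:ℝ) < Real.log 3 := Real.log_pos (by norm_num)
  have hlog2 : (0:ℝ) < Real.log 2 := Real.log_pos (by norm_num)
  have hlt : Real.log 2 < Real.log 3 := Real.log_lt_log (by norm_num) (by norm_num)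
  have hθ0 : 0 < θ := div_pos hlog2 hlog3
  have hθ1 : θ < 1 := (div_lt_one hlog3).2 hlt
  have h2θ : 1 < 2*θ := by
    have h43 : Real.log 3 < 2 * Real.log 2 := by
      have h1 : Real.log 3 < Real.log 4 := Real.log_lt_log (by norm_num) (by norm_num)
      have h4 : Real.log 4 = 2 * Real.log 2 := by
        rw [show (4:ℝ) = 2^(2:ℕ) by norm_num, Real.log_pow]
        push_cast; ring
      linarith
    have h5 : 1 < (2*Real.log 2)/Real.log 3 := (one_lt_div hlog3).2 h43
    rw [hθdef, ← mul_div_assoc]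
    exact h5
  have hB3 : (3:ℝ)^a < 3 := three_rpow_lt_three ha ha1
  set B : ℝ := (3:ℝ)^a with hBdef
  have hBpos : 0 < B := by positivity
  have h3θ : (3:ℝ)^θ = 2 := by
    rw [Real.rpow_def_of_pos (by norm_num : (0:ℝ) < 3)]
    rw [show Real.log 3 * θ = Real.log 2 by rw [hθdef]; field_simp]
    exact Real.exp_log (by norm_num)
  have e1 : (2:ℝ)^a = B ^ θ := by
    rw [hBdef, ← Real.rpow_mul (by norm_num : (0:ℝ) ≤ 3)]
    rw [Real.rpow_def_of_pos (by norm_num : (0:ℝ) < 3),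
        Real.rpow_def_of_pos (by norm_num : (0:ℝ) < 2)]
    congr 1
    rw [hθdef]; field_simp
  have e2 : B ^ θ = 2 * (B/3)^θ := by
    have h' : B ^ θ = (3 * (B/3)) ^ θ := by congr 1; ring
    rw [h', Real.mul_rpow (by norm_num) (by positivity), h3θ]
  have e3 : (B/3) ^ θ ≤ 1 + θ * (B/3 - 1) := by
    have h6 := rpow_one_add_le_one_add_mul_self
      (show (-1:ℝ) ≤ B/3 - 1 by nlinarith) hθ0.le hθ1.le
    have harg : 1 + (B/3 - 1) = B/3 := by ring
    rw [harg] at h6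
    linarith
  nlinarith [e1, e2, e3, mul_lt_mul_of_pos_left hB3 (by linarith : (0:ℝ) < 2*θ-1)]


/-! ### tFn lemmas -/

section TFn

variable {s : ℝ} (h0 : 0 < 3 - 2*s) (h1 : 3 - 2*s < 1)

include h0 in
lemma tFn_zero : tFn s 0 = 2*(2:ℝ)^(3-2*s) - 8 := by
  unfold tFn
  rw [show |(0:ℕ) - (2:ℝ)| = 2 by norm_num, show |(0:ℕ) - (1:ℝ)| = 1 by norm_num]
  rw [show ((0:ℕ):ℝ) = 0 by norm_num]
  rw [Real.zero_rpow (by linarith), Real.one_rpow]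
  norm_num
  ring

include h0 in
lemma tFn_one : tFn s 1 = 7 - 4*(2:ℝ)^(3-2*s) + (3:ℝ)^(3-2*s) := by
  unfold tFn
  rw [show |(1:ℕ) - (2:ℝ)| = 1 by norm_num, show |(1:ℕ) - (1:ℝ)| = 0 by norm_num]
  rw [show ((1:ℕ):ℝ) = 1 by norm_num]
  rw [Real.zero_rpow (by linarith), Real.one_rpow]
  norm_num

lemma tFn_zero_neg (h0 : 0 < 3 - 2*s) (h1 : 3 - 2*s < 1) : tFn s 0 < 0 := by
  rw [tFn_zero h0]
  linarith [two_rpow_lt_four h0 h1]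

lemma tFn_one_pos (h0 : 0 < 3 - 2*s) (h1 : 3 - 2*s < 1) : 0 < tFn s 1 := by
  rw [tFn_one h0]
  linarith [two_rpow_lt_two h0 h1, one_lt_three_rpow h0]

lemma tFn_eq_phi {p : ℕ} (hp : 2 ≤ p) :
    tFn s p = phi (3-2*s) ((p:ℝ)-1) - 2*phi (3-2*s) (p:ℝ) + phi (3-2*s) ((p:ℝ)+1) := by
  have h2 : (2:ℝ) ≤ (p:ℝ) := by exact_mod_cast hp
  unfold tFn phi
  rw [abs_of_nonneg (by linarith : (0:ℝ) ≤ (p:ℝ) - 2),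
      abs_of_nonneg (by linarith : (0:ℝ) ≤ (p:ℝ) - 1)]
  rw [show (p:ℝ)-1+1 = (p:ℝ) by ring, show (p:ℝ)-1-1 = (p:ℝ)-2 by ring,
      show (p:ℝ)+1+1 = (p:ℝ)+2 by ring, show (p:ℝ)+1-1 = (p:ℝ) by ring]
  ring

include h0 h1 in
lemma tFn_neg {p : ℕ} (hp : 2 ≤ p) : tFn s p < 0 := by
  rw [tFn_eq_phi hp]
  have h2 : (2:ℝ) ≤ (p:ℝ) := by exact_mod_cast hp
  have key := (phi_strictConcaveOn h0 h1).2
    (mem_Ici.2 (by linarith : (1:ℝ) ≤ (p:ℝ) - 1))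
    (mem_Ici.2 (by linarith : (1:ℝ) ≤ (p:ℝ) + 1))
    (ne_of_lt (by linarith))
    (by norm_num : (0:ℝ) < 1/2) (by norm_num : (0:ℝ) < 1/2) (by norm_num)
  simp only [smul_eq_mul] at key
  rw [show (1/2:ℝ) * ((p:ℝ)-1) + (1/2:ℝ) * ((p:ℝ)+1) = (p:ℝ) by ring] at key
  linarith

include h0 h1 in
lemma phi_lt_succ {m : ℕ} (hm : 1 ≤ m) : phi (3-2*s) (m:ℝ) < phi (3-2*s) ((m:ℝ)+1) := by
  have h2 : (1:ℝ) ≤ (m:ℝ) := by exact_mod_cast hm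
  exact phi_strictMonoOn h0 h1 (mem_Ici.2 h2) (mem_Ici.2 (by linarith)) (by linarith)

lemma telescope : ∀ m : ℕ, 1 ≤ m →
    ∑ j ∈ Finset.Icc 2 m, tFn s j
      = phi (3-2*s) 1 - phi (3-2*s) 2 - phi (3-2*s) (m:ℝ) + phi (3-2*s) ((m:ℝ)+1) := by
  intro m
  induction m with
  | zero => intro h; omega
  | succ n ih =>
    intro _
    rcases Nat.eq_or_lt_of_le (Nat.one_le_iff_ne_zero.2 (Nat.succ_ne_zero n)) with h | h
    · -- n + 1 = 1, i.e. n = 0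
      have hn : n = 0 := by omega
      subst hn
      rw [Finset.Icc_eq_empty_of_lt (by norm_num : (1:ℕ) < 2)]
      push_cast
      rw [Finset.sum_empty, show (1:ℝ)+1 = 2 by norm_num]
      ring
    · have hn : 1 ≤ n := by omega
      rw [Finset.sum_Icc_succ_top (by omega : 2 ≤ n + 1)]
      rw [ih hn, tFn_eq_phi (by omega : 2 ≤ n + 1)]
      push_cast
      ring

include h0 h1 in
lemma row_bound : ∀ m : ℕ, ∑ j ∈ Finset.Icc 1 m, |tFn s j| < -tFn s 0 := by
  intro m
  have ht0 := tFn_zero_neg h0 h1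
  rcases Nat.eq_zero_or_pos m with hm | hm
  · subst hm
    simp [Finset.Icc_eq_empty_of_lt]
    linarith
  · have hsplit : Finset.Icc 1 m = insert 1 (Finset.Icc 2 m) := by
      ext x; simp [Finset.mem_Icc, Finset.mem_insert]; omega
    rw [hsplit, Finset.sum_insert (by simp)]
    rw [abs_of_pos (tFn_one_pos h0 h1)]
    have habs : ∑ j ∈ Finset.Icc 2 m, |tFn s j| = -∑ j ∈ Finset.Icc 2 m, tFn s j := by
      rw [← Finset.sum_neg_distrib]
      apply Finset.sum_congr rfl
      intro j hj
      rw [Finset.mem_Icc] at hj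
      exact abs_of_neg (tFn_neg h0 h1 hj.1)
    rw [habs, telescope m hm]
    rw [tFn_zero h0, tFn_one h0]
    have hphi1 : phi (3-2*s) 1 = (2:ℝ)^(3-2*s) - 2 := by
      unfold phi
      rw [show (1:ℝ)+1 = 2 by norm_num, show (1:ℝ)-1 = 0 by norm_num,
        Real.zero_rpow (by linarith), Real.one_rpow]
      ring
    have hphi2 : phi (3-2*s) 2 = (3:ℝ)^(3-2*s) - 2*(2:ℝ)^(3-2*s) + 1 := by
      unfold phi
      rw [show (2:ℝ)+1 = 3 by norm_num, show (2:ℝ)-1 = 1 by norm_num, Real.one_rpow]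
    rw [hphi1, hphi2]
    have hmono := phi_lt_succ h0 h1 hm
    have hf5 := fact5 h0 h1
    linarith

end TFn
end Stmt16Aux

open Stmt16Aux

theorem stmt16 (s : ℝ) (hs : s ∈ Set.Ioo (1 : ℝ) (3 / 2))
    (h : ℝ) (hh : 0 < h) (N : ℕ) (hN : 2 ≤ N)
    (S : Matrix (Fin (N - 1)) (Fin (N - 1)) ℝ)
    (hS : ∀ k j, S k j =
      Acoef s * h ^ (1 - 2 * s) * tFn s (((k : ℕ) : ℤ) - ((j : ℕ) : ℤ)).natAbs) :
    (∀ k, 0 < S k k) ∧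
    (∀ k j : Fin (N - 1), (((k : ℕ) : ℤ) - ((j : ℕ) : ℤ)).natAbs = 1 → S k j < 0) ∧
    (∀ k j : Fin (N - 1), 2 ≤ (((k : ℕ) : ℤ) - ((j : ℕ) : ℤ)).natAbs → 0 < S k j) ∧
    (∀ k : Fin (N - 1), (k : ℕ) = 0 ∨ (k : ℕ) = N - 2 →
      ∑ j ∈ Finset.univ.filter (fun j => j ≠ k), |S k j| < S k k) ∧
    (4 ≤ N → ∀ k : Fin (N - 1), 1 ≤ (k : ℕ) → (k : ℕ) ≤ N - 3 →
      S k k < ∑ j ∈ Finset.univ.filter (fun j => j ≠ k), |S k j|) := by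
  obtain ⟨hs1, hs2⟩ := hs
  have h0 : 0 < 3 - 2*s := by linarith
  have h1 : 3 - 2*s < 1 := by linarith
  set C : ℝ := Acoef s * h ^ (1 - 2 * s) with hCdef
  have hC : C < 0 := by
    have hΓ : 0 < Real.Gamma (4 - 2*s) := Real.Gamma_pos_of_pos (by linarith)
    have hπ := Real.pi_pos
    have hcos : Real.cos (s * Real.pi) < 0 := by
      apply Real.cos_neg_of_pi_div_two_lt_of_lt
      · nlinarith
      · nlinarith
    have hden : 2 * Real.Gamma (4 - 2 * s) * Real.cos (s * Real.pi) < 0 :=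
      mul_neg_of_pos_of_neg (by linarith) hcos
    have hA : Acoef s < 0 := div_neg_of_pos_of_neg one_pos hden
    exact mul_neg_of_neg_of_pos hA (Real.rpow_pos_of_pos hh _)
  have ht0 : tFn s 0 < 0 := tFn_zero_neg h0 h1
  have ht1 : 0 < tFn s 1 := tFn_one_pos h0 h1
  have hSkk : ∀ k : Fin (N-1), S k k = C * tFn s 0 := by
    intro k
    rw [hS k k]
    simp only [sub_self, Int.natAbs_zero]
  refine ⟨?_, ?_, ?_, ?_, ?_⟩
  · intro k
    rw [hSkk k]
    exact mul_pos_of_neg_of_neg hC ht0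
  · intro k j hkj
    rw [hS k j, hkj]
    exact mul_neg_of_neg_of_pos hC ht1
  · intro k j hkj
    rw [hS k j]
    exact mul_pos_of_neg_of_neg hC (tFn_neg h0 h1 hkj)
  · -- first and last rows
    intro k hk
    have hkN : (k:ℕ) < N - 1 := k.isLt
    have hre : ∑ j ∈ Finset.univ.filter (fun j => j ≠ k),
          |tFn s (((k : ℕ) : ℤ) - ((j : ℕ) : ℤ)).natAbs|
        = ∑ d ∈ Finset.Icc 1 (N - 1 - 1), |tFn s d| := by
      rcases hk with hk | hk
      · refine Finset.sum_bij' (fun (j : Fin (N-1)) _ => (j:ℕ))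
          (fun d hd => ⟨d, by simp only [Finset.mem_Icc] at hd; omega⟩) ?_ ?_ ?_ ?_ ?_
        · intro a ha
          simp only [Finset.mem_filter, Finset.mem_univ, true_and] at ha
          have h2 : (a:ℕ) ≠ 0 := by
            intro hc
            exact ha (Fin.ext (by rw [hc, hk]))
          have h3 : (a:ℕ) < N - 1 := a.isLt
          simp only [Finset.mem_Icc]
          omega
        · intro d hd
          simp only [Finset.mem_Icc] at hd
          simp only [Finset.mem_filter, Finset.mem_univ, true_and]
          intro hc
          have := congrArg Fin.val hc
          simp only [hk] at this
          omega
        · intro a _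
          exact Fin.ext rfl
        · intro d _
          rfl
        · intro a _
          have he : (((k : ℕ) : ℤ) - ((a : ℕ) : ℤ)).natAbs = (a:ℕ) := by
            rw [hk]; omega
          rw [he]
      · have hk' : (k:ℕ) = N - 1 - 1 := by omega
        refine Finset.sum_bij' (fun (j : Fin (N-1)) _ => N - 1 - 1 - (j:ℕ))
          (fun d hd => ⟨N - 1 - 1 - d, by simp only [Finset.mem_Icc] at hd; omega⟩)
          ?_ ?_ ?_ ?_ ?_
        · intro a ha
          simp only [Finset.mem_filter, Finset.mem_univ, true_and] at ha
          have h2 : (a:ℕ) ≠ N - 1 - 1 := by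
            intro hc
            exact ha (Fin.ext (by rw [hc, hk']))
          have h3 : (a:ℕ) < N - 1 := a.isLt
          simp only [Finset.mem_Icc]
          omega
        · intro d hd
          simp only [Finset.mem_Icc] at hd
          simp only [Finset.mem_filter, Finset.mem_univ, true_and]
          intro hc
          have := congrArg Fin.val hc
          simp only [hk'] at this
          omega
        · intro a ha
          simp only [Finset.mem_filter, Finset.mem_univ, true_and] at ha
          have h3 : (a:ℕ) < N - 1 := a.isLt
          exact Fin.ext (by simp only; omega)
        · intro d hd
          simp only [Finset.mem_Icc] at hd
          simp only
          omega
        · intro a ha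
          simp only [Finset.mem_filter, Finset.mem_univ, true_and] at ha
          have h3 : (a:ℕ) < N - 1 := a.isLt
          have he : (((k : ℕ) : ℤ) - ((a : ℕ) : ℤ)).natAbs = N - 1 - 1 - (a:ℕ) := by
            rw [hk']; omega
          rw [he]
    calc ∑ j ∈ Finset.univ.filter (fun j => j ≠ k), |S k j|
        = (-C) * ∑ j ∈ Finset.univ.filter (fun j => j ≠ k),
            |tFn s (((k : ℕ) : ℤ) - ((j : ℕ) : ℤ)).natAbs| := by
          rw [Finset.mul_sum]
          refine Finset.sum_congr rfl fun j _ => ?_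
          rw [hS k j, abs_mul, abs_of_neg hC]
      _ = (-C) * ∑ d ∈ Finset.Icc 1 (N - 1 - 1), |tFn s d| := by rw [hre]
      _ < (-C) * (-(tFn s 0)) :=
          mul_lt_mul_of_pos_left (row_bound h0 h1 _) (neg_pos.2 hC)
      _ = S k k := by rw [hSkk k]; ring
  · -- middle rows
    intro hN4 k hk1 hk2
    have hkN : (k:ℕ) < N - 1 := k.isLt
    have hj1lt : (k:ℕ) - 1 < N - 1 := by omega
    have hj2lt : (k:ℕ) + 1 < N - 1 := by omega
    set j1 : Fin (N-1) := ⟨(k:ℕ) - 1, hj1lt⟩ with hj1def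
    set j2 : Fin (N-1) := ⟨(k:ℕ) + 1, hj2lt⟩ with hj2def
    have hd1 : (((k : ℕ) : ℤ) - ((j1 : ℕ) : ℤ)).natAbs = 1 := by
      simp only [hj1def]
      omega
    have hd2 : (((k : ℕ) : ℤ) - ((j2 : ℕ) : ℤ)).natAbs = 1 := by
      simp only [hj2def]
      omega
    have hj1k : j1 ≠ k := by
      intro hc
      have := congrArg Fin.val hc
      simp only [hj1def] at this
      omega
    have hj2k : j2 ≠ k := by
      intro hc
      have := congrArg Fin.val hc
      simp only [hj2def] at this
      omega
    have hj12 : j1 ≠ j2 := by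
      intro hc
      have := congrArg Fin.val hc
      simp only [hj1def, hj2def] at this
      omega
    have hsub : ({j1, j2} : Finset (Fin (N-1))) ⊆ Finset.univ.filter (fun j => j ≠ k) := by
      intro x hx
      simp only [Finset.mem_insert, Finset.mem_singleton] at hx
      simp only [Finset.mem_filter, Finset.mem_univ, true_and]
      rcases hx with rfl | rfl
      · exact hj1k
      · exact hj2k
    have hsum : ∑ j ∈ ({j1, j2} : Finset (Fin (N-1))), |S k j|
        ≤ ∑ j ∈ Finset.univ.filter (fun j => j ≠ k), |S k j| :=
      Finset.sum_le_sum_of_subset_of_nonneg hsub (fun _ _ _ => abs_nonneg _)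
    rw [Finset.sum_pair hj12] at hsum
    have hv1 : |S k j1| = (-C) * tFn s 1 := by
      rw [hS k j1, hd1, abs_mul, abs_of_neg hC, abs_of_pos ht1]
    have hv2 : |S k j2| = (-C) * tFn s 1 := by
      rw [hS k j2, hd2, abs_mul, abs_of_neg hC, abs_of_pos ht1]
    rw [hv1, hv2] at hsum
    have hineq : -(tFn s 0) < 2 * tFn s 1 := by
      rw [tFn_zero h0, tFn_one h0]
      linarith [fact6 h0 h1]
    have hlt := mul_lt_mul_of_pos_left hineq (neg_pos.2 hC)
    have hexp : (-C) * (2 * tFn s 1) = (-C) * tFn s 1 + (-C) * tFn s 1 := by ring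
    have hSkk' : S k k = (-C) * (-(tFn s 0)) := by rw [hSkk k]; ring
    linarith
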